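/- arXiv:2305.17148 — 4 statements merged into one kernel-verified Lean document; each statement's English description precedes it below -/
import Mathlib

section
/- Fix ε > 0 and integers n, d ≥ 1, and set σ = 3d²/(εn). Consider the randomized mechanism that, on input a dataset X = [X₁,…,Xₙ] with each Xᵢ ∈ [0,1]^d, outputs M̂ = M + A, where M is the centered covariance matrix of X and A is a random symmetric d×d matrix with entries A_ij = A_ji = λ_ij for i < j and A_ii = 2λ_ii, where (λ_ij)_{i≤j} are i.i.d. Laplace Lap(σ) random variables. Then this mechanism is ε-differentially private: for any neighboring datasets X, X' ∈ ([0,1]^d)ⁿ and any measurable set S of symmetric d×d matrices, P(M + A ∈ S) ≤ e^ε · P(M' + A ∈ S). -/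
open MeasureTheory Matrix
open scoped ENNReal

noncomputable def lap (b : ℝ) : MeasureTheory.Measure ℝ :=
  MeasureTheory.volume.withDensity fun x => ENNReal.ofReal (Real.exp (-|x| / b) / (2 * b))

instance (b : ℝ) : MeasureTheory.SigmaFinite (lap b) :=
  MeasureTheory.SigmaFinite.withDensity_ofReal _

/-- Two datasets are neighboring if they differ in at most one column. -/
def neighbors {n : ℕ} {α : Type*} (X X' : Fin n → α) : Prop :=
  ∃ k, ∀ i, i ≠ k → X i = X' i

/-- The mean vector of a dataset. -/
noncomputable def meanVec {n d : ℕ} (X : Fin n → Fin d → ℝ) : Fin d → ℝ :=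
  fun j => (∑ i, X i j) / n

/-- The centered covariance matrix (as a function of its entries). -/
noncomputable def covFn {n d : ℕ} (X : Fin n → Fin d → ℝ) : Fin d → Fin d → ℝ :=
  fun a b => (∑ i, (X i a - meanVec X a) * (X i b - meanVec X b)) / ((n : ℝ) - 1)

/-- The symmetric noise matrix built from the i.i.d. family `(ω (i,j))_{i ≤ j}`:
entries `A i j = A j i = ω (i,j)` for `i < j` and `A i i = 2 * ω (i,i)`. -/
noncomputable def noiseFn {d : ℕ} (ω : Fin d × Fin d → ℝ) : Fin d → Fin d → ℝ :=
  fun i j => if i = j then 2 * ω (i, i) else if i < j then ω (i, j) else ω (j, i)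

/-! ### Auxiliary measure-theoretic lemmas -/

section MeasureAux

variable {ι : Type*} [Fintype ι] [DecidableEq ι]

lemma lmarg_prod (μ : ι → Measure ℝ) [∀ i, SigmaFinite (μ i)] (f : ι → ℝ → ℝ≥0∞)
    (hf : ∀ i, Measurable (f i)) (s : Finset ι) (x : ι → ℝ) :
    (∫⋯∫⁻_s, (fun ω => ∏ i, f i (ω i)) ∂μ) x
      = (∏ i ∈ sᶜ, f i (x i)) * ∏ i ∈ s, ∫⁻ y, f i y ∂μ i := by
  have hF : Measurable fun ω : ι → ℝ => ∏ i, f i (ω i) :=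
    Finset.measurable_prod _ fun i _ => (hf i).comp (measurable_pi_apply i)
  induction s using Finset.induction generalizing x with
  | empty => simp
  | @insert j s hj ih =>
    rw [lmarginal_insert _ hF hj]
    simp_rw [ih]
    have hjc : j ∈ sᶜ := by simp [hj]
    have key : ∀ y : ℝ, (∏ i ∈ sᶜ, f i (Function.update x j y i))
        = f j y * ∏ i ∈ sᶜ.erase j, f i (x i) := by
      intro y
      rw [← Finset.mul_prod_erase _ _ hjc]
      congr 1
      · simp
      · exact Finset.prod_congr rfl fun i hi => by
          rw [Function.update_of_ne (Finset.ne_of_mem_erase hi)]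
    simp_rw [key]
    simp_rw [mul_assoc]
    rw [lintegral_mul_const _ (hf j), Finset.prod_insert hj, Finset.compl_insert]
    ring

lemma lintegral_pi_prod (μ : ι → Measure ℝ) [∀ i, SigmaFinite (μ i)] (f : ι → ℝ → ℝ≥0∞)
    (hf : ∀ i, Measurable (f i)) :
    ∫⁻ ω, ∏ i, f i (ω i) ∂Measure.pi μ = ∏ i, ∫⁻ y, f i y ∂μ i := by
  classical
  obtain ⟨x⟩ : Nonempty (ι → ℝ) := ⟨fun _ => 0⟩
  rw [lintegral_eq_lmarginal_univ (μ := μ) x, lmarg_prod μ f hf Finset.univ x]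
  simp

lemma lapDensity_meas (b : ℝ) :
    Measurable fun x : ℝ => ENNReal.ofReal (Real.exp (-|x| / b) / (2 * b)) := by
  fun_prop

lemma pi_lap_eq (b : ℝ) :
    Measure.pi (fun _ : ι => lap b)
      = volume.withDensity
          (fun ω : ι → ℝ => ∏ i, ENNReal.ofReal (Real.exp (-|ω i| / b) / (2 * b))) := by
  refine Measure.pi_eq (μ := fun _ : ι => lap b) fun s hs => ?_
  rw [withDensity_apply _ (MeasurableSet.univ_pi hs)]
  have : ∀ ω : ι → ℝ, (Set.univ.pi s).indicator
      (fun ω : ι → ℝ => ∏ i, ENNReal.ofReal (Real.exp (-|ω i| / b) / (2 * b))) ω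
      = ∏ i, (s i).indicator (fun x => ENNReal.ofReal (Real.exp (-|x| / b) / (2 * b))) (ω i) := by
    intro ω
    by_cases h : ω ∈ Set.univ.pi s
    · rw [Set.indicator_of_mem h]
      exact Finset.prod_congr rfl fun i _ =>
        (Set.indicator_of_mem (h i (Set.mem_univ i))
          (fun x => ENNReal.ofReal (Real.exp (-|x| / b) / (2 * b)))).symm
    · rw [Set.indicator_of_notMem h]
      obtain ⟨i, hi⟩ : ∃ i, ω i ∉ s i := by
        by_contra hcon
        push_neg at hcon
        exact h (Set.mem_univ_pi.mpr hcon)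
      exact (Finset.prod_eq_zero (Finset.mem_univ i)
        (Set.indicator_of_notMem hi _)).symm
  rw [← lintegral_indicator (MeasurableSet.univ_pi hs)]
  simp_rw [this]
  rw [show (volume : Measure (ι → ℝ)) = Measure.pi fun _ => volume from volume_pi]
  rw [lintegral_pi_prod (fun _ : ι => (volume : Measure ℝ)) _
    (fun i => (lapDensity_meas b).indicator (hs i))]
  exact Finset.prod_congr rfl fun i _ => by
    rw [lintegral_indicator (hs i), lap, withDensity_apply _ (hs i)]

lemma lap_shift_bound (b : ℝ) (hb : 0 < b) (t : ι → ℝ) (A : Set (ι → ℝ))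
    (hA : MeasurableSet A) :
    Measure.pi (fun _ : ι => lap b) ((fun ω => ω + t) ⁻¹' A)
      ≤ ENNReal.ofReal (Real.exp ((∑ i, |t i|) / b))
        * Measure.pi (fun _ : ι => lap b) A := by
  classical
  set F : (ι → ℝ) → ℝ≥0∞ :=
    fun ω => ∏ i, ENNReal.ofReal (Real.exp (-|ω i| / b) / (2 * b)) with hF
  have hFmeas : Measurable F :=
    Finset.measurable_prod _ fun i _ => (lapDensity_meas b).comp (measurable_pi_apply i)
  have hadd : Measurable fun ω : ι → ℝ => ω + t :=
    measurable_pi_lambda _ fun i => by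
      simpa only [Pi.add_apply] using
        (measurable_pi_apply i : Measurable fun x : ι → ℝ => x i).add_const (t i)
  have hMP : MeasurePreserving (fun ω : ι → ℝ => ω + t) volume volume :=
    measurePreserving_add_right volume t
  have hsub : Measurable fun ω : ι → ℝ => F (ω - t) :=
    hFmeas.comp (measurable_pi_lambda _ fun i => by
      simpa only [Pi.sub_apply] using
        (measurable_pi_apply i : Measurable fun x : ι → ℝ => x i).sub_const (t i))
  rw [pi_lap_eq, withDensity_apply _ (hA.preimage hadd), withDensity_apply _ hA]
  calc ∫⁻ ω in (fun ω => ω + t) ⁻¹' A, F ω ∂volume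
      = ∫⁻ ω in (fun ω => ω + t) ⁻¹' A,
          (fun y => F (y - t)) ((fun ω => ω + t) ω) ∂volume := by
        refine setLIntegral_congr_fun (hA.preimage hadd) (fun ω _ => ?_)
        simp
    _ = ∫⁻ y in A, F (y - t) ∂volume := hMP.setLIntegral_comp_preimage hA hsub
    _ ≤ ∫⁻ y in A, ENNReal.ofReal (Real.exp ((∑ i, |t i|) / b)) * F y ∂volume := by
        refine setLIntegral_mono (hFmeas.const_mul _) fun y _ => ?_
        have hfac : ∀ i : ι,
            ENNReal.ofReal (Real.exp (-|y i - t i| / b) / (2 * b))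
              ≤ ENNReal.ofReal (Real.exp (|t i| / b))
                * ENNReal.ofReal (Real.exp (-|y i| / b) / (2 * b)) := by
          intro i
          rw [← ENNReal.ofReal_mul (Real.exp_pos _).le]
          refine ENNReal.ofReal_le_ofReal ?_
          rw [← mul_div_assoc, ← Real.exp_add]
          refine div_le_div_of_nonneg_right ?_ (by positivity)
          refine Real.exp_le_exp.mpr ?_
          rw [← add_div]
          have hnum : -|y i - t i| ≤ |t i| + -|y i| := by
            have h1 := abs_sub_abs_le_abs_sub (y i) (y i - t i)
            have h2 : y i - (y i - t i) = t i := by ring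
            rw [h2] at h1
            linarith
          gcongr
        calc F (y - t) = ∏ i, ENNReal.ofReal (Real.exp (-|y i - t i| / b) / (2 * b)) := by
              simp [hF, Pi.sub_apply]
          _ ≤ ∏ i, (ENNReal.ofReal (Real.exp (|t i| / b))
                * ENNReal.ofReal (Real.exp (-|y i| / b) / (2 * b))) :=
              Finset.prod_le_prod' fun i _ => hfac i
          _ = (∏ i, ENNReal.ofReal (Real.exp (|t i| / b))) * F y := by
              rw [Finset.prod_mul_distrib]
          _ = ENNReal.ofReal (Real.exp ((∑ i, |t i|) / b)) * F y := by
              rw [← ENNReal.ofReal_prod_of_nonneg (fun i _ => (Real.exp_pos _).le)]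
              congr 1
              rw [← Real.exp_sum]
              congr 1
              rw [Finset.sum_div]
    _ = ENNReal.ofReal (Real.exp ((∑ i, |t i|) / b)) * ∫⁻ y in A, F y ∂volume :=
        lintegral_const_mul _ hFmeas

end MeasureAux

/-! ### Auxiliary algebraic lemmas -/

lemma cov_ident {n : ℕ} (hn : 1 ≤ n) (x y : Fin n → ℝ) :
    (2 * (n : ℝ)) * ∑ i, (x i - (∑ j, x j) / n) * (y i - (∑ j, y j) / n)
      = ∑ i, ∑ j, (x i - x j) * (y i - y j) := by
  have hn0 : (n : ℝ) ≠ 0 := Nat.cast_ne_zero.mpr (by omega)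
  have h1 : ∑ i, (x i - (∑ j, x j) / n) * (y i - (∑ j, y j) / n)
      = (∑ i, x i * y i) - (∑ j, x j) * (∑ j, y j) / n := by
    simp only [sub_mul, mul_sub, Finset.sum_sub_distrib]
    rw [← Finset.sum_mul, ← Finset.mul_sum, Finset.sum_const, Finset.card_univ,
      Fintype.card_fin, nsmul_eq_mul]
    field_simp
    ring
  have h2 : ∑ i, ∑ j, ((x i - x j) * (y i - y j))
      = 2 * ((n : ℝ) * ∑ i, x i * y i) - 2 * ((∑ j, x j) * (∑ j, y j)) := by
    have : ∀ i, ∑ j, ((x i - x j) * (y i - y j))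
        = (n : ℝ) * (x i * y i) - x i * ∑ j, y j - (∑ j, x j) * y i + ∑ j, x j * y j := by
      intro i
      simp only [sub_mul, mul_sub, Finset.sum_sub_distrib, Finset.sum_add_distrib,
        ← Finset.mul_sum, ← Finset.sum_mul, Finset.sum_const, Finset.card_univ,
        Fintype.card_fin, nsmul_eq_mul]
      ring
    rw [Finset.sum_congr rfl fun i _ => this i]
    simp only [Finset.sum_add_distrib, Finset.sum_sub_distrib, ← Finset.mul_sum,
      ← Finset.sum_mul, Finset.sum_const, Finset.card_univ, Fintype.card_fin, nsmul_eq_mul]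
    ring
  rw [h1, h2]
  field_simp

lemma covFn_eq {n d : ℕ} (hn : 1 ≤ n) (X : Fin n → Fin d → ℝ) (a b : Fin d) :
    covFn X a b
      = (∑ i, ∑ j, (X i a - X j a) * (X i b - X j b)) / (2 * (n : ℝ) * ((n : ℝ) - 1)) := by
  have hn0 : (2 * (n : ℝ)) ≠ 0 := by
    have : (n : ℝ) ≠ 0 := Nat.cast_ne_zero.mpr (by omega)
    positivity
  have hid := cov_ident hn (fun i => X i a) (fun i => X i b)
  rw [covFn, meanVec, meanVec]
  rw [show (∑ i, (X i a - (∑ i, X i a) / (n : ℝ)) * (X i b - (∑ i, X i b) / (n : ℝ)))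
      = (∑ i, ∑ j, (X i a - X j a) * (X i b - X j b)) / (2 * (n : ℝ)) from by
    rw [eq_div_iff hn0, mul_comm]; exact hid]
  rw [div_div]

lemma covFn_symm {n d : ℕ} (X : Fin n → Fin d → ℝ) (a b : Fin d) :
    covFn X a b = covFn X b a := by
  unfold covFn
  congr 1
  exact Finset.sum_congr rfl fun i _ => mul_comm _ _

lemma prod_abs_le_one {n d : ℕ} (Y : Fin n → Fin d → ℝ)
    (hY : ∀ i j, Y i j ∈ Set.Icc (0 : ℝ) 1) (a b : Fin d) (i j : Fin n) :
    |(Y i a - Y j a) * (Y i b - Y j b)| ≤ 1 := by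
  obtain ⟨h1, h2⟩ := hY i a
  obtain ⟨h3, h4⟩ := hY j a
  obtain ⟨h5, h6⟩ := hY i b
  obtain ⟨h7, h8⟩ := hY j b
  rw [abs_mul]
  have e1 : |Y i a - Y j a| ≤ 1 := by rw [abs_le]; constructor <;> linarith
  have e2 : |Y i b - Y j b| ≤ 1 := by rw [abs_le]; constructor <;> linarith
  calc |Y i a - Y j a| * |Y i b - Y j b| ≤ 1 * 1 :=
        mul_le_mul e1 e2 (abs_nonneg _) zero_le_one
    _ = 1 := by ring

lemma cov_sens {n d : ℕ} (hn : 1 ≤ n) (X X' : Fin n → Fin d → ℝ)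
    (hX : ∀ i j, X i j ∈ Set.Icc (0 : ℝ) 1) (hX' : ∀ i j, X' i j ∈ Set.Icc (0 : ℝ) 1)
    (k : Fin n) (hk : ∀ i, i ≠ k → X i = X' i) (a b : Fin d) :
    |covFn X a b - covFn X' a b| ≤ 2 / ((n : ℝ) - 1) := by
  rcases eq_or_lt_of_le hn with h1 | h2
  · have hz : ((n : ℝ) - 1) = 0 := by rw [← h1]; norm_num
    simp [covFn, hz]
  · have hn2 : 2 ≤ n := h2
    have hpos : (0 : ℝ) < (n : ℝ) - 1 := by
      have : (2 : ℝ) ≤ (n : ℝ) := by exact_mod_cast hn2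
      linarith
    have hnpos : (0 : ℝ) < (n : ℝ) := by linarith
    rw [covFn_eq hn X a b, covFn_eq hn X' a b, div_sub_div_same, abs_div,
      abs_of_pos (by positivity : (0:ℝ) < 2 * (n:ℝ) * ((n:ℝ) - 1)),
      div_le_div_iff₀ (by positivity) hpos]
    have hterm : ∀ i j : Fin n,
        |(X i a - X j a) * (X i b - X j b) - (X' i a - X' j a) * (X' i b - X' j b)|
          ≤ (if i = k then (2 : ℝ) else 0) + (if j = k then (2 : ℝ) else 0) := by
      intro i j
      by_cases hi : i = k
      · have h2' : (0:ℝ) ≤ (if j = k then (2 : ℝ) else 0) := by positivity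
        calc |(X i a - X j a) * (X i b - X j b) - (X' i a - X' j a) * (X' i b - X' j b)|
            ≤ |(X i a - X j a) * (X i b - X j b)| + |(X' i a - X' j a) * (X' i b - X' j b)| :=
              abs_sub _ _
          _ ≤ 1 + 1 := add_le_add (prod_abs_le_one X hX a b i j) (prod_abs_le_one X' hX' a b i j)
          _ ≤ _ := by simp [hi]; linarith
      · by_cases hj : j = k
        · have h2' : (0:ℝ) ≤ (if i = k then (2 : ℝ) else 0) := by positivity
          calc |(X i a - X j a) * (X i b - X j b) - (X' i a - X' j a) * (X' i b - X' j b)|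
              ≤ |(X i a - X j a) * (X i b - X j b)| + |(X' i a - X' j a) * (X' i b - X' j b)| :=
                abs_sub _ _
            _ ≤ 1 + 1 := add_le_add (prod_abs_le_one X hX a b i j) (prod_abs_le_one X' hX' a b i j)
            _ ≤ _ := by simp [hj]; linarith
        · rw [hk i hi, hk j hj]
          simp [hi, hj]
    have hsum : |(∑ i, ∑ j, (X i a - X j a) * (X i b - X j b))
        - ∑ i, ∑ j, (X' i a - X' j a) * (X' i b - X' j b)| ≤ 4 * (n : ℝ) := by
      rw [← Finset.sum_sub_distrib]
      simp_rw [← Finset.sum_sub_distrib]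
      calc |∑ i, ∑ j, ((X i a - X j a) * (X i b - X j b)
              - (X' i a - X' j a) * (X' i b - X' j b))|
          ≤ ∑ i, |∑ j, ((X i a - X j a) * (X i b - X j b)
              - (X' i a - X' j a) * (X' i b - X' j b))| := Finset.abs_sum_le_sum_abs _ _
        _ ≤ ∑ i : Fin n, ∑ j : Fin n,
              |(X i a - X j a) * (X i b - X j b) - (X' i a - X' j a) * (X' i b - X' j b)| :=
            Finset.sum_le_sum fun i _ => Finset.abs_sum_le_sum_abs _ _
        _ ≤ ∑ i : Fin n, ∑ j : Fin n,
              ((if i = k then (2 : ℝ) else 0) + (if j = k then (2 : ℝ) else 0)) :=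
            Finset.sum_le_sum fun i _ => Finset.sum_le_sum fun j _ => hterm i j
        _ = 4 * (n : ℝ) := by
            simp [Finset.sum_add_distrib, Finset.sum_ite_eq', Finset.sum_const,
              Finset.card_univ, Finset.mul_sum]
            ring
    calc |(∑ i, ∑ j, (X i a - X j a) * (X i b - X j b))
            - ∑ i, ∑ j, (X' i a - X' j a) * (X' i b - X' j b)| * ((n : ℝ) - 1)
        ≤ (4 * (n : ℝ)) * ((n : ℝ) - 1) := mul_le_mul_of_nonneg_right hsum hpos.le
      _ = 2 * (2 * (n : ℝ) * ((n : ℝ) - 1)) := by ring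

theorem stmt_0 (d n : ℕ) (hd : 1 ≤ d) (hn : 1 ≤ n) (ε : ℝ) (hε : 0 < ε)
    (X X' : Fin n → Fin d → ℝ)
    (hX : ∀ i j, X i j ∈ Set.Icc (0 : ℝ) 1) (hX' : ∀ i j, X' i j ∈ Set.Icc (0 : ℝ) 1)
    (hXX' : neighbors X X')
    (S : Set (Fin d → Fin d → ℝ)) (hS : MeasurableSet S) :
    (MeasureTheory.Measure.pi fun _ : Fin d × Fin d => lap (3 * d ^ 2 / (ε * n)))
        {ω | covFn X + noiseFn ω ∈ S}
      ≤ ENNReal.ofReal (Real.exp ε) *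
        (MeasureTheory.Measure.pi fun _ : Fin d × Fin d => lap (3 * d ^ 2 / (ε * n)))
          {ω | covFn X' + noiseFn ω ∈ S} := by
  classical
  obtain ⟨k, hk⟩ := hXX'
  have hd0 : (0 : ℝ) < (d : ℝ) := by exact_mod_cast Nat.lt_of_lt_of_le Nat.zero_lt_one hd
  have hn0 : (0 : ℝ) < (n : ℝ) := by exact_mod_cast Nat.lt_of_lt_of_le Nat.zero_lt_one hn
  set b : ℝ := 3 * d ^ 2 / (ε * n) with hbdef
  have hb : 0 < b := div_pos (by positivity) (mul_pos hε hn0)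
  set D : Fin d → Fin d → ℝ := fun a c => covFn X a c - covFn X' a c with hD
  have hDsymm : ∀ a c, D a c = D c a := by
    intro a c
    simp only [hD, covFn_symm X a c, covFn_symm X' a c]
  have hDle : ∀ a c, |D a c| ≤ 2 / ((n : ℝ) - 1) :=
    fun a c => cov_sens hn X X' hX hX' k hk a c
  set t : Fin d × Fin d → ℝ :=
    fun e => if e.1 = e.2 then D e.1 e.1 / 2 else if e.1 < e.2 then D e.1 e.2 else 0 with ht
  have hnoise : ∀ ω : Fin d × Fin d → ℝ, noiseFn (ω + t) = noiseFn ω + D := by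
    intro ω
    funext i j
    simp only [noiseFn, Pi.add_apply]
    by_cases h1 : i = j
    · subst h1
      simp [ht]
      ring
    · by_cases h2 : i < j
      · simp [ht, h1, h2]
      · have h3 : j < i := lt_of_le_of_ne (le_of_not_gt h2) (Ne.symm h1)
        have h4 : ¬ (j = i) := Ne.symm h1
        simp only [ht, if_neg h1, if_neg h2, Pi.add_apply, if_neg h4, if_pos h3]
        rw [hDsymm j i]
  have hset : {ω : Fin d × Fin d → ℝ | covFn X + noiseFn ω ∈ S}
      = (fun ω => ω + t) ⁻¹' {ω | covFn X' + noiseFn ω ∈ S} := by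
    ext ω
    simp only [Set.mem_setOf_eq, Set.mem_preimage, hnoise]
    have : covFn X' + (noiseFn ω + D) = covFn X + noiseFn ω := by
      funext a c
      simp only [Pi.add_apply, hD]
      ring
    rw [this]
  have hA : MeasurableSet {ω : Fin d × Fin d → ℝ | covFn X' + noiseFn ω ∈ S} := by
    have hmeas : Measurable fun ω : Fin d × Fin d → ℝ => covFn X' + noiseFn ω := by
      refine measurable_pi_lambda _ fun a => measurable_pi_lambda _ fun c => ?_
      simp only [Pi.add_apply]
      refine Measurable.const_add ?_ _
      unfold noiseFn
      by_cases h1 : a = c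
      · simp only [if_pos h1]
        exact (measurable_pi_apply _).const_mul 2
      · by_cases h2 : a < c
        · simp only [if_neg h1, if_pos h2]
          exact measurable_pi_apply _
        · simp only [if_neg h1, if_neg h2]
          exact measurable_pi_apply _
    exact hmeas hS
  rw [hset]
  refine le_trans (lap_shift_bound b hb t _ hA) ?_
  refine mul_le_mul_left (ENNReal.ofReal_le_ofReal (Real.exp_le_exp.mpr ?_)) _
  -- it remains to show (∑ e, |t e|) / b ≤ ε
  rw [div_le_iff₀ hb]
  have hεb : ε * b = 3 * (d : ℝ) ^ 2 / n := by
    rw [hbdef]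
    field_simp
  rw [hεb]
  -- bound the sum of |t e|
  set B : ℝ := 2 / ((n : ℝ) - 1) with hB
  have hBnn : 0 ≤ B := by
    rcases le_or_gt ((n : ℝ) - 1) 0 with h | h
    · have := hDle ⟨0, by omega⟩ ⟨0, by omega⟩
      have := abs_nonneg (D ⟨0, by omega⟩ ⟨0, by omega⟩)
      linarith
    · positivity
  have hte : ∀ e : Fin d × Fin d, |t e|
      ≤ B / 2 * (if e.1 = e.2 then (1 : ℝ) else 0)
        + B * (if e.1 < e.2 then (1 : ℝ) else 0) := by
    intro e
    by_cases h1 : e.1 = e.2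
    · have h2 : ¬ e.1 < e.2 := by rw [h1]; exact lt_irrefl _
      simp only [ht, if_pos h1, if_neg h2, mul_one, mul_zero, add_zero]
      rw [abs_div, abs_two]
      have := hDle e.1 e.1
      linarith
    · by_cases h2 : e.1 < e.2
      · simp only [ht, if_neg h1, if_pos h2, mul_zero, mul_one, zero_add]
        exact hDle e.1 e.2
      · simp only [ht, if_neg h1, if_neg h2, mul_zero, add_zero, abs_zero]
        positivity
  have hδ : ∑ e : Fin d × Fin d, (if e.1 = e.2 then (1 : ℝ) else 0) = (d : ℝ) := by
    rw [Fintype.sum_prod_type]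
    simp [Finset.sum_ite_eq]
  have hχ : ∑ e : Fin d × Fin d, (if e.1 < e.2 then (1 : ℝ) else 0)
      = ((d : ℝ) ^ 2 - d) / 2 := by
    have hpair : ∀ i j : Fin d, (if i < j then (1 : ℝ) else 0)
        + (if j < i then (1 : ℝ) else 0) + (if i = j then (1 : ℝ) else 0) = 1 := by
      intro i j
      rcases lt_trichotomy i j with h | h | h
      · simp [h, asymm h, ne_of_lt h]
      · simp [h, lt_irrefl]
      · simp [h, asymm h, ne_of_gt h]
    have htot : ∑ i : Fin d, ∑ j : Fin d, ((if i < j then (1 : ℝ) else 0)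
        + (if j < i then (1 : ℝ) else 0) + (if i = j then (1 : ℝ) else 0)) = (d : ℝ) ^ 2 := by
      rw [Finset.sum_congr rfl fun i _ => Finset.sum_congr rfl fun j _ => hpair i j]
      simp [Finset.sum_const, Finset.card_univ]
      ring
    simp only [Finset.sum_add_distrib] at htot
    have hswap : ∑ i : Fin d, ∑ j : Fin d, (if j < i then (1 : ℝ) else 0)
        = ∑ i : Fin d, ∑ j : Fin d, (if i < j then (1 : ℝ) else 0) := Finset.sum_comm
    have hdiag : ∑ i : Fin d, ∑ j : Fin d, (if i = j then (1 : ℝ) else 0) = (d : ℝ) := by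
      simp [Finset.sum_ite_eq]
    rw [Fintype.sum_prod_type]
    rw [hswap, hdiag] at htot
    linarith
  calc ∑ e : Fin d × Fin d, |t e|
      ≤ ∑ e : Fin d × Fin d, (B / 2 * (if e.1 = e.2 then (1 : ℝ) else 0)
          + B * (if e.1 < e.2 then (1 : ℝ) else 0)) :=
        Finset.sum_le_sum fun e _ => hte e
    _ = B / 2 * (d : ℝ) + B * (((d : ℝ) ^ 2 - d) / 2) := by
        rw [Finset.sum_add_distrib, ← Finset.mul_sum, ← Finset.mul_sum, hδ, hχ]
    _ = (d : ℝ) ^ 2 / ((n : ℝ) - 1) := by rw [hB]; ring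
    _ ≤ 3 * (d : ℝ) ^ 2 / n := by
        rcases eq_or_lt_of_le hn with h1 | h2
        · have hz : ((n : ℝ) - 1) = 0 := by rw [← h1]; norm_num
          rw [hz, div_zero]
          positivity
        · have h2' : (2 : ℝ) ≤ (n : ℝ) := by exact_mod_cast h2
          rw [div_le_div_iff₀ (by linarith) hn0]
          nlinarith [sq_nonneg (d : ℝ)]
end

section
/- (Stability of noisy projection.) Let X be a d×n real matrix and A a d×d real symmetric matrix. Let M = (1/n)XXᵀ with eigenvalues σ₁ ≥ σ₂ ≥ … ≥ σ_d, let M̂ = M + A, and let v̂₁,…,v̂_{d'} be orthonormal eigenvectors of M̂ corresponding to its d' largest eigenvalues; set V̂ = [v̂₁,…,v̂_{d'}] and Y = V̂ V̂ᵀ X. Then (1/n)‖X − Y‖_F² ≤ Σ_{i > d'} σᵢ + 2d'‖A‖, where ‖A‖ denotes the operator norm and ‖·‖_F the Frobenius norm. No spectral-gap assumption on M is required. -/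
open MeasureTheory Matrix
open scoped ENNReal

/-- The squared Frobenius norm of a matrix. -/
noncomputable def frobSq {m n : ℕ} (B : Matrix (Fin m) (Fin n) ℝ) : ℝ := ∑ i, ∑ j, B i j ^ 2

/-- The operator (spectral) norm of a square matrix. -/
noncomputable def opNorm {d : ℕ} (A : Matrix (Fin d) (Fin d) ℝ) : ℝ :=
  ‖Matrix.toEuclideanCLM (𝕜 := ℝ) A‖

/-- A family of vectors in `ℝ^d` is orthonormal (with respect to the Euclidean inner product). -/
def OrthonormalFamily {κ : Type*} [DecidableEq κ] {d : ℕ} (v : κ → Fin d → ℝ) : Prop :=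
  ∀ i j, v i ⬝ᵥ v j = if i = j then (1 : ℝ) else 0

lemma quad_bound {d : ℕ} (A : Matrix (Fin d) (Fin d) ℝ) (u : Fin d → ℝ)
    (hu : u ⬝ᵥ u = 1) : |u ⬝ᵥ A.mulVec u| ≤ opNorm A := by
  set x : EuclideanSpace ℝ (Fin d) := (WithLp.equiv 2 _).symm u with hx
  have hnorm : ‖x‖ = 1 := by
    have : ‖x‖^2 = 1 := by
      rw [← real_inner_self_eq_norm_sq]
      rw [EuclideanSpace.inner_eq_star_dotProduct]
      simpa [hx, dotProduct_comm] using hu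
    nlinarith [norm_nonneg x]
  have hTx : (Matrix.toEuclideanCLM (𝕜 := ℝ) A) x = (WithLp.equiv 2 _).symm (A.mulVec u) := by
    rw [hx]
    rfl
  have hinner : u ⬝ᵥ A.mulVec u = inner ℝ x ((Matrix.toEuclideanCLM (𝕜 := ℝ) A) x) := by
    rw [hTx]
    simp [EuclideanSpace.inner_eq_star_dotProduct, hx, dotProduct, mulVec, Finset.mul_sum, mul_comm]
  rw [hinner]
  calc |inner ℝ x ((Matrix.toEuclideanCLM (𝕜 := ℝ) A) x)| ≤ ‖x‖ * ‖(Matrix.toEuclideanCLM (𝕜 := ℝ) A) x‖ :=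
        abs_real_inner_le_norm _ _
    _ ≤ ‖x‖ * (‖Matrix.toEuclideanCLM (𝕜 := ℝ) A‖ * ‖x‖) := by
        gcongr; exact ContinuousLinearMap.le_opNorm _ _
    _ = opNorm A := by rw [hnorm, one_mul, mul_one]; rfl

lemma filter_lt_eq_map {d d' : ℕ} (hd' : d' ≤ d) :
    Finset.univ.filter (fun i : Fin d => i.val < d')
      = Finset.univ.map (Fin.castLEEmb hd') := by
  ext i
  simp only [Finset.mem_filter, Finset.mem_univ, true_and, Finset.mem_map, Fin.castLEEmb,
    Function.Embedding.coeFn_mk]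
  constructor
  · intro h
    exact ⟨⟨i.val, h⟩, rfl⟩
  · rintro ⟨j, rfl⟩
    exact j.isLt

lemma card_filter_lt {d d' : ℕ} (hd' : d' ≤ d) :
    (Finset.univ.filter (fun i : Fin d => i.val < d')).card = d' := by
  rw [filter_lt_eq_map hd']; simp

lemma sum_filter_lt_eq {d d' : ℕ} (hd' : d' ≤ d) (f : Fin d → ℝ) :
    (∑ i ∈ Finset.univ.filter (fun i : Fin d => i.val < d'), f i)
      = ∑ j : Fin d', f (Fin.castLE hd' j) := by
  rw [filter_lt_eq_map hd', Finset.sum_map]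
  rfl

lemma kyfan {d d' : ℕ} (hd' : d' ≤ d) (s c : Fin d → ℝ) (hs : Antitone s)
    (hc0 : ∀ i, 0 ≤ c i) (hc1 : ∀ i, c i ≤ 1) (hsum : ∑ i, c i = d') :
    ∑ i, s i * c i ≤ ∑ i ∈ Finset.univ.filter (fun i : Fin d => i.val < d'), s i := by
  rcases lt_or_eq_of_le hd' with h | h
  · set t := s ⟨d', h⟩ with ht
    have key : ∑ i, (s i - t) * c i ≤ ∑ i ∈ Finset.univ.filter (fun i : Fin d => i.val < d'), (s i - t) := by
      rw [← Finset.sum_filter_add_sum_filter_not Finset.univ (fun i : Fin d => i.val < d')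
        (fun i => (s i - t) * c i)]
      have h1 : ∑ i ∈ Finset.univ.filter (fun i : Fin d => i.val < d'), (s i - t) * c i
          ≤ ∑ i ∈ Finset.univ.filter (fun i : Fin d => i.val < d'), (s i - t) := by
        apply Finset.sum_le_sum
        intro i hi
        simp only [Finset.mem_filter] at hi
        have hst : t ≤ s i := hs (Fin.le_def.mpr (le_of_lt hi.2))
        nlinarith [hc0 i, hc1 i]
      have h2 : ∑ i ∈ Finset.univ.filter (fun i : Fin d => ¬ i.val < d'), (s i - t) * c i ≤ 0 := by
        apply Finset.sum_nonpos
        intro i hi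
        simp only [Finset.mem_filter, not_lt] at hi
        have hst : s i ≤ t := hs (Fin.le_def.mpr hi.2)
        exact mul_nonpos_of_nonpos_of_nonneg (by linarith) (hc0 i)
      linarith
    have e1 : ∑ i, s i * c i = ∑ i, (s i - t) * c i + t * d' := by
      rw [← hsum, Finset.mul_sum, ← Finset.sum_add_distrib]
      congr 1; ext i; ring
    have e2 : ∑ i ∈ Finset.univ.filter (fun i : Fin d => i.val < d'), (s i - t)
        = (∑ i ∈ Finset.univ.filter (fun i : Fin d => i.val < d'), s i) - t * d' := by
      rw [Finset.sum_sub_distrib, Finset.sum_const, card_filter_lt hd', nsmul_eq_mul]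
      ring
    linarith
  · subst h
    have hfilter : Finset.univ.filter (fun i : Fin d' => i.val < d') = Finset.univ := by
      ext i; simp [i.isLt]
    rw [hfilter]
    have hc : ∀ i, c i = 1 := by
      have hz : ∑ i : Fin d', (1 - c i) = 0 := by
        rw [Finset.sum_sub_distrib, hsum]
        simp
      intro i
      have := (Finset.sum_eq_zero_iff_of_nonneg (fun j _ => by linarith [hc1 j])).mp hz i
        (Finset.mem_univ i)
      linarith
    apply le_of_eq
    apply Finset.sum_congr rfl
    intro i _
    rw [hc i, mul_one]

lemma orth_mul {d k : ℕ} (w : Fin k → Fin d → ℝ)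
    (hw : ∀ i j, w i ⬝ᵥ w j = if i = j then (1:ℝ) else 0) :
    (Matrix.of fun i j => w j i)ᵀ * (Matrix.of fun i j => w j i) = 1 := by
  ext i j
  have := hw i j
  simp only [Matrix.mul_apply, Matrix.transpose_apply, Matrix.of_apply, Matrix.one_apply,
    dotProduct] at this ⊢
  rw [this]

lemma eig_mul {d k : ℕ} (M : Matrix (Fin d) (Fin d) ℝ) (w : Fin k → Fin d → ℝ) (μ : Fin k → ℝ)
    (hw : ∀ j, M.mulVec (w j) = μ j • w j) :
    M * (Matrix.of fun i j => w j i) = (Matrix.of fun i j => w j i) * Matrix.diagonal μ := by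
  ext i j
  have := congrFun (hw j) i
  simp only [Matrix.mulVec, dotProduct, Pi.smul_apply, smul_eq_mul] at this
  simp [Matrix.mul_apply, Matrix.diagonal_apply, Finset.sum_ite_eq, this, mul_comm]

lemma trace_diagonal_mul {k : ℕ} (f : Fin k → ℝ) (B : Matrix (Fin k) (Fin k) ℝ) :
    (Matrix.diagonal f * B).trace = ∑ i, f i * B i i := by
  simp [Matrix.trace, Matrix.diag, Matrix.mul_apply, Matrix.diagonal]

lemma proj_trace_bound {d k : ℕ} (A : Matrix (Fin d) (Fin d) ℝ) (w : Fin k → Fin d → ℝ)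
    (hw : ∀ j, w j ⬝ᵥ w j = 1) :
    |(A * ((Matrix.of fun i j => w j i) * (Matrix.of fun i j => w j i)ᵀ)).trace| ≤ k * opNorm A := by
  set W : Matrix (Fin d) (Fin k) ℝ := Matrix.of fun i j => w j i with hW
  have h1 : (A * (W * Wᵀ)).trace = (Wᵀ * (A * W)).trace := by
    rw [← Matrix.mul_assoc, Matrix.trace_mul_comm]
  have h2 : ∀ j, (Wᵀ * (A * W)) j j = w j ⬝ᵥ A.mulVec (w j) := by
    intro j
    simp only [Matrix.mul_apply, Matrix.transpose_apply, hW, Matrix.of_apply, dotProduct,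
      Matrix.mulVec, Finset.mul_sum]
  rw [h1]
  have : (Wᵀ * (A * W)).trace = ∑ j, w j ⬝ᵥ A.mulVec (w j) := by
    simp only [Matrix.trace, Matrix.diag]
    exact Finset.sum_congr rfl fun j _ => h2 j
  rw [this]
  calc |∑ j, w j ⬝ᵥ A.mulVec (w j)| ≤ ∑ j, |w j ⬝ᵥ A.mulVec (w j)| := Finset.abs_sum_le_sum_abs _ _
    _ ≤ ∑ _j : Fin k, opNorm A := Finset.sum_le_sum fun j _ => quad_bound A (w j) (hw j)
    _ = k * opNorm A := by simp [mul_comm]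

theorem stmt_3 (d n d' : ℕ) (hn : 1 ≤ n) (hd' : d' ≤ d)
    (X : Matrix (Fin d) (Fin n) ℝ) (A : Matrix (Fin d) (Fin d) ℝ) (hA : A.IsSymm)
    (σ : Fin d → ℝ) (v : Fin d → Fin d → ℝ)
    (hv : OrthonormalFamily v)
    (heig : ∀ i, ((n : ℝ)⁻¹ • (X * Xᵀ)).mulVec (v i) = σ i • v i)
    (hσ : Antitone σ)
    (σh : Fin d → ℝ) (vh : Fin d → Fin d → ℝ)
    (hvh : OrthonormalFamily vh)
    (heigh : ∀ i, ((n : ℝ)⁻¹ • (X * Xᵀ) + A).mulVec (vh i) = σh i • vh i)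
    (hσh : Antitone σh)
    (Vh : Matrix (Fin d) (Fin d') ℝ) (hVh : ∀ i j, Vh i j = vh (Fin.castLE hd' j) i)
    (Y : Matrix (Fin d) (Fin n) ℝ) (hY : Y = Vh * Vhᵀ * X) :
    (n : ℝ)⁻¹ * frobSq (X - Y)
      ≤ (∑ i ∈ Finset.univ.filter fun i : Fin d => d' ≤ i.val, σ i) + 2 * d' * opNorm A := by
  classical
  set M : Matrix (Fin d) (Fin d) ℝ := (n : ℝ)⁻¹ • (X * Xᵀ) with hM
  set Mh : Matrix (Fin d) (Fin d) ℝ := M + A with hMhdef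
  set V : Matrix (Fin d) (Fin d) ℝ := Matrix.of fun i j => v j i with hV
  set Vf : Matrix (Fin d) (Fin d) ℝ := Matrix.of fun i j => vh j i with hVf
  set v' : Fin d' → Fin d → ℝ := fun j => v (Fin.castLE hd' j) with hv'def
  set vh' : Fin d' → Fin d → ℝ := fun j => vh (Fin.castLE hd' j) with hvh'def
  set Vp : Matrix (Fin d) (Fin d') ℝ := Matrix.of fun i j => v' j i with hVp
  have hcastinj : Function.Injective (Fin.castLE hd') := Fin.castLE_injective hd'
  have hv'o : ∀ i j, v' i ⬝ᵥ v' j = if i = j then (1:ℝ) else 0 := by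
    intro i j
    by_cases h : i = j
    · subst h; simp [hv'def, hv _ _]
    · rw [hv'def]
      simp only
      rw [hv _ _, if_neg (fun hc => h (hcastinj hc)), if_neg h]
  have hvh'o : ∀ i j, vh' i ⬝ᵥ vh' j = if i = j then (1:ℝ) else 0 := by
    intro i j
    by_cases h : i = j
    · subst h; simp [hvh'def, hvh _ _]
    · rw [hvh'def]
      simp only
      rw [hvh _ _, if_neg (fun hc => h (hcastinj hc)), if_neg h]
  have hVh_eq : Vh = Matrix.of fun i j => vh' j i := by
    ext i j; exact hVh i j
  -- orthogonality
  have hVo : Vᵀ * V = 1 := orth_mul v hv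
  have hVo' : V * Vᵀ = 1 := mul_eq_one_comm.mp hVo
  have hVfo : Vfᵀ * Vf = 1 := orth_mul vh hvh
  have hVfo' : Vf * Vfᵀ = 1 := mul_eq_one_comm.mp hVfo
  have hVpo : Vpᵀ * Vp = 1 := orth_mul v' hv'o
  have hVho : Vhᵀ * Vh = 1 := by rw [hVh_eq]; exact orth_mul vh' hvh'o
  -- eigen equations in matrix form
  have hMV : M * V = V * Matrix.diagonal σ := eig_mul M v σ heig
  have hMhVf : Mh * Vf = Vf * Matrix.diagonal σh := eig_mul Mh vh σh heigh
  have hMVp : M * Vp = Vp * Matrix.diagonal (fun j => σ (Fin.castLE hd' j)) :=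
    eig_mul M v' _ (fun j => heig _)
  have hMhVh : Mh * Vh = Vh * Matrix.diagonal (fun j => σh (Fin.castLE hd' j)) := by
    rw [hVh_eq]; exact eig_mul Mh vh' _ (fun j => heigh _)
  set P : Matrix (Fin d) (Fin d) ℝ := Vh * Vhᵀ with hP
  set Q : Matrix (Fin d) (Fin d) ℝ := Vp * Vpᵀ with hQ
  have hPt : Pᵀ = P := by rw [hP, Matrix.transpose_mul, Matrix.transpose_transpose]
  have hPP : P * P = P := by
    rw [hP, Matrix.mul_assoc, ← Matrix.mul_assoc Vhᵀ Vh Vhᵀ, hVho, Matrix.one_mul]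
  -- Frobenius norm as trace
  have hfs : frobSq (X - Y) = ((X - Y)ᵀ * (X - Y)).trace := by
    simp only [frobSq, Matrix.trace, Matrix.diag, Matrix.mul_apply, Matrix.transpose_apply, sq]
    exact Finset.sum_comm
  have hXY : (X - Y)ᵀ * (X - Y) = Xᵀ * X - Xᵀ * (P * X) := by
    rw [hY]
    have hPPX : P * (P * X) = P * X := by rw [← Matrix.mul_assoc, hPP]
    rw [Matrix.transpose_sub, Matrix.transpose_mul, hPt, Matrix.sub_mul, Matrix.mul_sub,
      Matrix.mul_sub]
    simp only [Matrix.mul_assoc]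
    rw [hPPX, sub_self, sub_zero]
  -- trace M
  have htrM : M.trace = ∑ i, σ i := by
    calc M.trace = (M * (V * Vᵀ)).trace := by rw [hVo', Matrix.mul_one]
      _ = ((V * Matrix.diagonal σ) * Vᵀ).trace := by rw [← Matrix.mul_assoc, hMV]
      _ = (Vᵀ * (V * Matrix.diagonal σ)).trace := Matrix.trace_mul_comm _ _
      _ = ((Vᵀ * V) * Matrix.diagonal σ).trace := by rw [Matrix.mul_assoc]
      _ = (Matrix.diagonal σ).trace := by rw [hVo, Matrix.one_mul]
      _ = ∑ i, σ i := Matrix.trace_diagonal σ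
  -- trace (Mh * P)
  have htrMhP : (Mh * P).trace = ∑ j : Fin d', σh (Fin.castLE hd' j) := by
    calc (Mh * P).trace
        = ((Vh * Matrix.diagonal (fun j => σh (Fin.castLE hd' j))) * Vhᵀ).trace := by
          rw [hP, ← Matrix.mul_assoc, hMhVh]
      _ = (Vhᵀ * (Vh * Matrix.diagonal (fun j => σh (Fin.castLE hd' j)))).trace :=
          Matrix.trace_mul_comm _ _
      _ = ((Vhᵀ * Vh) * Matrix.diagonal (fun j => σh (Fin.castLE hd' j))).trace := by
          rw [Matrix.mul_assoc]
      _ = (Matrix.diagonal (fun j => σh (Fin.castLE hd' j))).trace := by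
          rw [hVho, Matrix.one_mul]
      _ = ∑ j : Fin d', σh (Fin.castLE hd' j) := Matrix.trace_diagonal _
  -- trace (M * Q)
  have htrMQ : (M * Q).trace = ∑ j : Fin d', σ (Fin.castLE hd' j) := by
    calc (M * Q).trace
        = ((Vp * Matrix.diagonal (fun j => σ (Fin.castLE hd' j))) * Vpᵀ).trace := by
          rw [hQ, ← Matrix.mul_assoc, hMVp]
      _ = (Vpᵀ * (Vp * Matrix.diagonal (fun j => σ (Fin.castLE hd' j)))).trace :=
          Matrix.trace_mul_comm _ _
      _ = ((Vpᵀ * Vp) * Matrix.diagonal (fun j => σ (Fin.castLE hd' j))).trace := by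
          rw [Matrix.mul_assoc]
      _ = (Matrix.diagonal (fun j => σ (Fin.castLE hd' j))).trace := by
          rw [hVpo, Matrix.one_mul]
      _ = ∑ j : Fin d', σ (Fin.castLE hd' j) := Matrix.trace_diagonal _
  -- spectral decomposition of Mh
  have hMh_spec : Mh = Vf * Matrix.diagonal σh * Vfᵀ := by
    calc Mh = Mh * (Vf * Vfᵀ) := by rw [hVfo', Matrix.mul_one]
      _ = (Mh * Vf) * Vfᵀ := by rw [Matrix.mul_assoc]
      _ = Vf * Matrix.diagonal σh * Vfᵀ := by rw [hMhVf]
  -- the coefficients c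
  set G : Matrix (Fin d') (Fin d) ℝ := Vpᵀ * Vf with hG
  set Gf : Matrix (Fin d) (Fin d) ℝ := Vᵀ * Vf with hGf
  set c : Fin d → ℝ := fun i => ∑ j, (G j i)^2 with hc
  have hB : Vfᵀ * Q * Vf = Gᵀ * G := by
    rw [hQ, hG, Matrix.transpose_mul, Matrix.transpose_transpose]
    simp only [Matrix.mul_assoc]
  have htrMhQ : (Mh * Q).trace = ∑ i, σh i * c i := by
    calc (Mh * Q).trace
        = (Vf * (Matrix.diagonal σh * (Vfᵀ * Q))).trace := by
          rw [hMh_spec]; simp only [Matrix.mul_assoc]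
      _ = ((Matrix.diagonal σh * (Vfᵀ * Q)) * Vf).trace := Matrix.trace_mul_comm _ _
      _ = (Matrix.diagonal σh * (Vfᵀ * Q * Vf)).trace := by simp only [Matrix.mul_assoc]
      _ = (Matrix.diagonal σh * (Gᵀ * G)).trace := by rw [hB]
      _ = ∑ i, σh i * (Gᵀ * G) i i := trace_diagonal_mul _ _
      _ = ∑ i, σh i * c i := by
          apply Finset.sum_congr rfl
          intro i _
          congr 1
          simp [hc, Matrix.mul_apply, sq]
  have hc0 : ∀ i, 0 ≤ c i := fun i => Finset.sum_nonneg fun j _ => sq_nonneg _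
  have hGfull : Gfᵀ * Gf = 1 := by
    rw [hGf, Matrix.transpose_mul, Matrix.transpose_transpose]
    calc Vfᵀ * V * (Vᵀ * Vf) = Vfᵀ * ((V * Vᵀ) * Vf) := by simp only [Matrix.mul_assoc]
      _ = Vfᵀ * Vf := by rw [hVo', Matrix.one_mul]
      _ = 1 := hVfo
  have hGcast : ∀ (j : Fin d') (i : Fin d), G j i = Gf (Fin.castLE hd' j) i := by
    intro j i
    simp [hG, hGf, Matrix.mul_apply, hVp, hV, hv'def]
  have hc1 : ∀ i, c i ≤ 1 := by
    intro i
    have hfull : ∑ j : Fin d, (Gf j i)^2 = 1 := by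
      have h := congrFun (congrFun hGfull i) i
      simp only [Matrix.mul_apply, Matrix.transpose_apply, Matrix.one_apply_eq] at h
      calc ∑ j : Fin d, (Gf j i)^2 = ∑ j : Fin d, Gf j i * Gf j i := by
            apply Finset.sum_congr rfl; intro j _; ring
        _ = 1 := h
    calc c i = ∑ jj ∈ Finset.univ.filter (fun jj : Fin d => jj.val < d'), (Gf jj i)^2 := by
          rw [sum_filter_lt_eq hd' (fun jj => (Gf jj i)^2)]
          show (∑ j : Fin d', G j i ^ 2) = _
          exact Finset.sum_congr rfl fun j _ => by rw [hGcast]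
      _ ≤ ∑ j : Fin d, (Gf j i)^2 :=
          Finset.sum_le_sum_of_subset_of_nonneg (Finset.filter_subset _ _) (fun j _ _ => sq_nonneg _)
      _ = 1 := hfull
  have hcsum : ∑ i, c i = d' := by
    have h1 : ∑ i, c i = (Gᵀ * G).trace := by
      rw [Matrix.trace]
      apply Finset.sum_congr rfl
      intro i _
      simp [hc, Matrix.mul_apply, sq, Matrix.diag]
    rw [h1, Matrix.trace_mul_comm]
    have h2 : G * Gᵀ = (1 : Matrix (Fin d') (Fin d') ℝ) := by
      rw [hG, Matrix.transpose_mul, Matrix.transpose_transpose]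
      calc Vpᵀ * Vf * (Vfᵀ * Vp) = Vpᵀ * ((Vf * Vfᵀ) * Vp) := by simp only [Matrix.mul_assoc]
        _ = Vpᵀ * Vp := by rw [hVfo', Matrix.one_mul]
        _ = 1 := hVpo
    rw [h2, Matrix.trace_one]
    simp
  -- Ky Fan step
  have hKF : (Mh * Q).trace ≤ (Mh * P).trace := by
    rw [htrMhQ, htrMhP]
    calc ∑ i, σh i * c i ≤ ∑ i ∈ Finset.univ.filter (fun i : Fin d => i.val < d'), σh i :=
          kyfan hd' σh c hσh hc0 hc1 hcsum
      _ = ∑ j : Fin d', σh (Fin.castLE hd' j) := sum_filter_lt_eq hd' σh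
  -- bounds on the A-traces
  have hAP : |(A * P).trace| ≤ d' * opNorm A := by
    rw [hP, hVh_eq]
    exact proj_trace_bound A vh' (fun j => by rw [hvh'o j j, if_pos rfl])
  have hAQ : |(A * Q).trace| ≤ d' * opNorm A := by
    rw [hQ, hVp]
    exact proj_trace_bound A v' (fun j => by rw [hv'o j j, if_pos rfl])
  -- trace additivity
  have hsplitP : (Mh * P).trace = (M * P).trace + (A * P).trace := by
    rw [hMhdef, Matrix.add_mul, Matrix.trace_add]
  have hsplitQ : (Mh * Q).trace = (M * Q).trace + (A * Q).trace := by
    rw [hMhdef, Matrix.add_mul, Matrix.trace_add]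
  -- lower bound on trace (M * P)
  have hMP_lb : (∑ j : Fin d', σ (Fin.castLE hd' j)) - 2 * d' * opNorm A ≤ (M * P).trace := by
    have h4 := abs_le.mp hAP
    have h5 := abs_le.mp hAQ
    have := htrMQ
    linarith [hKF, hsplitP, hsplitQ]
  -- LHS as trace difference
  have hLHS : (n:ℝ)⁻¹ * frobSq (X - Y) = M.trace - (M * P).trace := by
    rw [hfs, hXY, Matrix.trace_sub]
    have e1 : M.trace = (n:ℝ)⁻¹ * (Xᵀ * X).trace := by
      rw [hM, Matrix.trace_smul, Matrix.trace_mul_comm, smul_eq_mul]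
    have e2 : (M * P).trace = (n:ℝ)⁻¹ * (Xᵀ * (P * X)).trace := by
      rw [hM, Matrix.smul_mul, Matrix.trace_smul, smul_eq_mul]
      congr 1
      calc (X * Xᵀ * P).trace = (P * (X * Xᵀ)).trace := (Matrix.trace_mul_comm _ _).symm
        _ = ((P * X) * Xᵀ).trace := by rw [Matrix.mul_assoc P X Xᵀ]
        _ = (Xᵀ * (P * X)).trace := Matrix.trace_mul_comm _ _
    rw [mul_sub, ← e1, ← e2]
  -- split the full sum
  have hfe : Finset.univ.filter (fun i : Fin d => ¬ i.val < d')
      = Finset.univ.filter (fun i : Fin d => d' ≤ i.val) := by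
    apply Finset.filter_congr
    intro i _
    simp [not_lt]
  have hsplitσ : ∑ i, σ i = (∑ j : Fin d', σ (Fin.castLE hd' j))
      + ∑ i ∈ Finset.univ.filter (fun i : Fin d => d' ≤ i.val), σ i := by
    rw [← sum_filter_lt_eq hd' σ, ← hfe]
    exact (Finset.sum_filter_add_sum_filter_not Finset.univ (fun i : Fin d => i.val < d') σ).symm
  rw [hLHS]
  rw [htrM] at *
  linarith [hMP_lb, hsplitσ]
end

section
/- Let X be a d×n real matrix and A a d×d real symmetric matrix. Let M = (1/n)XXᵀ with eigenvalues σ₁ ≥ … ≥ σ_d, and let M̂ = M + A with eigenvalues σ̂₁ ≥ … ≥ σ̂_d and corresponding orthonormal eigenvectors v̂₁,…,v̂_d; set V̂_{d'} = [v̂₁,…,v̂_{d'}]. Then the exact identity holds: ‖X − V̂_{d'} V̂_{d'}ᵀ X‖_F² = n Σ_{i ≤ d'} (σᵢ − σ̂ᵢ) + n·tr(A V̂_{d'} V̂_{d'}ᵀ) + n Σ_{i > d'} σᵢ. -/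
open MeasureTheory Matrix
open scoped ENNReal

theorem stmt_4 (d n d' : ℕ) (hn : 1 ≤ n) (hd' : d' ≤ d)
    (X : Matrix (Fin d) (Fin n) ℝ) (A : Matrix (Fin d) (Fin d) ℝ) (hA : A.IsSymm)
    (σ : Fin d → ℝ) (v : Fin d → Fin d → ℝ)
    (hv : OrthonormalFamily v)
    (heig : ∀ i, ((n : ℝ)⁻¹ • (X * Xᵀ)).mulVec (v i) = σ i • v i)
    (hσ : Antitone σ)
    (σh : Fin d → ℝ) (vh : Fin d → Fin d → ℝ)
    (hvh : OrthonormalFamily vh)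
    (heigh : ∀ i, ((n : ℝ)⁻¹ • (X * Xᵀ) + A).mulVec (vh i) = σh i • vh i)
    (hσh : Antitone σh)
    (Vh : Matrix (Fin d) (Fin d') ℝ) (hVh : ∀ i j, Vh i j = vh (Fin.castLE hd' j) i) :
    frobSq (X - Vh * Vhᵀ * X)
      = n * (∑ i ∈ Finset.univ.filter fun i : Fin d => i.val < d', (σ i - σh i))
        + n * Matrix.trace (A * Vh * Vhᵀ)
        + n * ∑ i ∈ Finset.univ.filter fun i : Fin d => d' ≤ i.val, σ i := by
  have hn0 : (n : ℝ) ≠ 0 := Nat.cast_ne_zero.mpr (by omega)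
  set M : Matrix (Fin d) (Fin d) ℝ := (n : ℝ)⁻¹ • (X * Xᵀ) with hMdef
  have hXXt : X * Xᵀ = (n : ℝ) • M := by
    rw [hMdef, smul_smul, mul_inv_cancel₀ hn0, one_smul]
  -- full eigenbasis matrix
  set V : Matrix (Fin d) (Fin d) ℝ := Matrix.of (fun i j => v j i) with hVdef
  have hVtV : Vᵀ * V = 1 := by
    ext j k
    have := hv j k
    simp only [dotProduct] at this
    simp only [Matrix.mul_apply, Matrix.transpose_apply, Matrix.one_apply, hVdef, Matrix.of_apply]
    exact this
  have hVVt : V * Vᵀ = 1 := mul_eq_one_comm.mp hVtV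
  have hMV : M * V = V * Matrix.diagonal σ := by
    ext i j
    have h1 := congrFun (heig j) i
    simp only [Matrix.mulVec, dotProduct, Pi.smul_apply, smul_eq_mul] at h1
    simp only [Matrix.mul_apply, hVdef, Matrix.of_apply, Matrix.diagonal_apply, mul_ite,
      mul_zero, Finset.sum_ite_eq', Finset.mem_univ, if_true]
    rw [h1]; ring
  have htrM : M.trace = ∑ i, σ i := by
    calc M.trace = (M * (V * Vᵀ)).trace := by rw [hVVt, Matrix.mul_one]
    _ = (V * Matrix.diagonal σ * Vᵀ).trace := by rw [← Matrix.mul_assoc, hMV]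
    _ = (Vᵀ * (V * Matrix.diagonal σ)).trace := (Matrix.trace_mul_comm _ _)
    _ = ∑ i, σ i := by rw [← Matrix.mul_assoc, hVtV, Matrix.one_mul, Matrix.trace_diagonal]
  -- partial eigenbasis matrix facts
  have hVhtVh : Vhᵀ * Vh = 1 := by
    ext j k
    have := hvh (Fin.castLE hd' j) (Fin.castLE hd' k)
    simp only [dotProduct] at this
    simp only [Matrix.mul_apply, Matrix.transpose_apply, Matrix.one_apply, hVh]
    rw [this]
    simp [Fin.castLE_inj]
  set P : Matrix (Fin d) (Fin d) ℝ := Vh * Vhᵀ with hPdef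
  have hPt : Pᵀ = P := by rw [hPdef, Matrix.transpose_mul, Matrix.transpose_transpose]
  have hPP : P * P = P := by
    rw [hPdef, Matrix.mul_assoc, ← Matrix.mul_assoc Vhᵀ, hVhtVh, Matrix.one_mul]
  have hMhVh : (M + A) * Vh = Vh * Matrix.diagonal (fun j => σh (Fin.castLE hd' j)) := by
    ext i j
    have h1 := congrFun (heigh (Fin.castLE hd' j)) i
    simp only [Matrix.mulVec, dotProduct, Pi.smul_apply, smul_eq_mul] at h1
    simp only [Matrix.mul_apply, hVh, Matrix.diagonal_apply, mul_ite, mul_zero,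
      Finset.sum_ite_eq', Finset.mem_univ, if_true]
    rw [h1]; ring
  have htrMhP : ((M + A) * P).trace = ∑ j : Fin d', σh (Fin.castLE hd' j) := by
    calc ((M + A) * P).trace = ((M + A) * Vh * Vhᵀ).trace := by rw [hPdef, Matrix.mul_assoc]
    _ = (Vh * Matrix.diagonal (fun j => σh (Fin.castLE hd' j)) * Vhᵀ).trace := by rw [hMhVh]
    _ = (Vhᵀ * (Vh * Matrix.diagonal (fun j => σh (Fin.castLE hd' j)))).trace :=
        Matrix.trace_mul_comm _ _
    _ = ∑ j : Fin d', σh (Fin.castLE hd' j) := by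
        rw [← Matrix.mul_assoc, hVhtVh, Matrix.one_mul, Matrix.trace_diagonal]
  have htrMP : (M * P).trace = (∑ j : Fin d', σh (Fin.castLE hd' j)) - (A * P).trace := by
    have : (M + A) * P = M * P + A * P := by rw [Matrix.add_mul]
    have h2 := htrMhP
    rw [this, Matrix.trace_add] at h2
    linarith
  -- frobSq identity
  have hfro : ∀ (B : Matrix (Fin d) (Fin n) ℝ), frobSq B = (B * Bᵀ).trace := by
    intro B
    simp [frobSq, Matrix.trace, Matrix.mul_apply, Matrix.diag, sq]
  have hkey : frobSq (X - P * X) = (X * Xᵀ).trace - (P * (X * Xᵀ)).trace := by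
    rw [hfro]
    have hexp : (X - P * X) * (X - P * X)ᵀ
        = X * Xᵀ - P * (X * Xᵀ) - (X * Xᵀ) * P + P * (X * Xᵀ) * P := by
      rw [Matrix.transpose_sub, Matrix.transpose_mul, hPt,
        Matrix.sub_mul, Matrix.mul_sub, Matrix.mul_sub]
      simp only [Matrix.mul_assoc]
      abel
    rw [hexp]
    have h1 : ((X * Xᵀ) * P).trace = (P * (X * Xᵀ)).trace := Matrix.trace_mul_comm _ _
    have h2 : (P * (X * Xᵀ) * P).trace = (P * (X * Xᵀ)).trace := by
      rw [Matrix.trace_mul_comm, ← Matrix.mul_assoc, hPP]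
    rw [Matrix.trace_add, Matrix.trace_sub, Matrix.trace_sub, h1, h2]
    ring
  have htrX : (X * Xᵀ).trace = (n : ℝ) * M.trace := by
    rw [hXXt, Matrix.trace_smul, smul_eq_mul]
  have htrPX : (P * (X * Xᵀ)).trace = (n : ℝ) * (M * P).trace := by
    rw [hXXt, Matrix.mul_smul, Matrix.trace_smul, smul_eq_mul, Matrix.trace_mul_comm]
  -- sums over filters
  have hfilt : ∀ f : Fin d → ℝ,
      (∑ i ∈ Finset.univ.filter fun i : Fin d => i.val < d', f i)
        = ∑ j : Fin d', f (Fin.castLE hd' j) := by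
    intro f
    have hset : (Finset.univ.filter fun i : Fin d => i.val < d')
        = Finset.univ.map (Fin.castLEEmb hd') := by
      ext i
      simp only [Finset.mem_filter, Finset.mem_univ, true_and, Finset.mem_map,
        Fin.castLEEmb_apply]
      constructor
      · intro h; exact ⟨⟨i.val, h⟩, by ext; simp⟩
      · rintro ⟨j, rfl⟩; exact j.isLt
    rw [hset, Finset.sum_map]
    simp [Fin.castLEEmb_apply]
  have hsplit : (∑ i ∈ Finset.univ.filter fun i : Fin d => i.val < d', σ i)
      + (∑ i ∈ Finset.univ.filter fun i : Fin d => d' ≤ i.val, σ i) = ∑ i, σ i := by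
    rw [show (Finset.univ.filter fun i : Fin d => d' ≤ i.val)
        = Finset.univ.filter fun i : Fin d => ¬ i.val < d' from by simp [not_lt]]
    exact Finset.sum_filter_add_sum_filter_not _ _ _
  have hsub : (∑ i ∈ Finset.univ.filter fun i : Fin d => i.val < d', (σ i - σh i))
      = (∑ i ∈ Finset.univ.filter fun i : Fin d => i.val < d', σ i)
        - (∑ i ∈ Finset.univ.filter fun i : Fin d => i.val < d', σh i) :=
    Finset.sum_sub_distrib _ _
  have hAP : Matrix.trace (A * Vh * Vhᵀ) = (A * P).trace := by
    rw [hPdef, Matrix.mul_assoc]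
  rw [show X - Vh * Vhᵀ * X = X - P * X from by rw [hPdef], hkey, htrX, htrPX, htrM, htrMP,
    hsub, hAP, hfilt σh, ← hsplit]
  ring
end

section
/- (Davis–Kahan type bound for the noisy top eigenvector.) Let X be a d×n real matrix and A a d×d real symmetric matrix. Let M = (1/n)XXᵀ with eigenvalues σ₁ ≥ σ₂ ≥ … ≥ σ_d and orthonormal eigenvectors v₁,…,v_d, and let M̂ = M + A with orthonormal eigenvectors v̂₁,…,v̂_d, where v̂₁ corresponds to the largest eigenvalue of M̂. If there is a spectral gap δ = σ₁ − σ₂ > 0, then (1/n)‖X − v̂₁v̂₁ᵀX‖_F² ≤ 2 Σ_{i > 1} σᵢ + (8/(nδ²))·‖A‖²·‖X‖_F², where ‖A‖ is the operator norm. -/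
open MeasureTheory Matrix
open scoped ENNReal

lemma opNorm_nonneg' {d : ℕ} (A : Matrix (Fin d) (Fin d) ℝ) : 0 ≤ opNorm A := norm_nonneg _

lemma mulVec_dot_le {d : ℕ} (A : Matrix (Fin d) (Fin d) ℝ) (u : Fin d → ℝ) (hu : u ⬝ᵥ u = 1) :
    (A.mulVec u) ⬝ᵥ (A.mulVec u) ≤ opNorm A ^ 2 := by
  set x : EuclideanSpace ℝ (Fin d) := (WithLp.equiv 2 _).symm u with hx
  have hnx : ‖x‖ = 1 := by
    rw [EuclideanSpace.norm_eq]
    have : ∑ i, ‖x i‖ ^ 2 = u ⬝ᵥ u := by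
      simp [hx, dotProduct, sq_abs, pow_two]
    rw [this, hu, Real.sqrt_one]
  have hTx : Matrix.toEuclideanCLM (𝕜 := ℝ) A x = (WithLp.equiv 2 _).symm (A.mulVec u) := by
    simp [hx, Matrix.toLin'_apply]
  have h1 : ‖Matrix.toEuclideanCLM (𝕜 := ℝ) A x‖ ≤ opNorm A := by
    calc ‖Matrix.toEuclideanCLM (𝕜 := ℝ) A x‖ ≤ opNorm A * ‖x‖ :=
          (Matrix.toEuclideanCLM (𝕜 := ℝ) A).le_opNorm x
      _ = opNorm A := by rw [hnx, mul_one]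
  have h2 : ‖Matrix.toEuclideanCLM (𝕜 := ℝ) A x‖ ^ 2 = (A.mulVec u) ⬝ᵥ (A.mulVec u) := by
    rw [hTx, EuclideanSpace.norm_eq, Real.sq_sqrt (by positivity)]
    simp [dotProduct, sq_abs, pow_two]
  nlinarith [norm_nonneg (Matrix.toEuclideanCLM (𝕜 := ℝ) A x)]

section OrthLemmas
variable {d : ℕ} {v : Fin d → Fin d → ℝ}

lemma orth_mul_s13 (hv : OrthonormalFamily v) : (Matrix.of v) * (Matrix.of v)ᵀ = 1 := by
  ext i j
  simp only [Matrix.mul_apply, Matrix.transpose_apply, Matrix.of_apply, Matrix.one_apply]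
  simpa [dotProduct] using hv i j

lemma orth_mul' (hv : OrthonormalFamily v) : (Matrix.of v)ᵀ * (Matrix.of v) = 1 :=
  mul_eq_one_comm.mp (orth_mul_s13 hv)

lemma parseval (hv : OrthonormalFamily v) (w u : Fin d → ℝ) :
    w ⬝ᵥ u = ∑ i, (v i ⬝ᵥ w) * (v i ⬝ᵥ u) := by
  have h : w ⬝ᵥ u = w ⬝ᵥ (((Matrix.of v)ᵀ * (Matrix.of v)).mulVec u) := by
    rw [orth_mul' hv, Matrix.one_mulVec]
  rw [h, ← Matrix.mulVec_mulVec, Matrix.dotProduct_mulVec, Matrix.vecMul_transpose]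
  simp [dotProduct, Matrix.mulVec, dotProduct, mul_comm]

lemma trace_orth (hv : OrthonormalFamily v) (M : Matrix (Fin d) (Fin d) ℝ) :
    Matrix.trace M = ∑ i, v i ⬝ᵥ M.mulVec (v i) := by
  have h : Matrix.trace M = Matrix.trace ((Matrix.of v) * M * (Matrix.of v)ᵀ) := by
    rw [Matrix.mul_assoc, Matrix.trace_mul_comm, Matrix.mul_assoc, orth_mul' hv,
      Matrix.mul_one]
  rw [h, Matrix.trace]
  congr 1; ext i
  simp only [Matrix.diag_apply, Matrix.mul_apply, Matrix.transpose_apply, Matrix.of_apply,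
    dotProduct, Matrix.mulVec, dotProduct, Finset.sum_mul, Finset.mul_sum]
  rw [Finset.sum_comm]
  apply Finset.sum_congr rfl; intro k _
  apply Finset.sum_congr rfl; intro l _
  ring

end OrthLemmas

lemma frobSq_eq_trace {m n : ℕ} (B : Matrix (Fin m) (Fin n) ℝ) :
    frobSq B = Matrix.trace (B * Bᵀ) := by
  simp [frobSq, Matrix.trace, Matrix.mul_apply, sq]

lemma frobSq_nonneg {m n : ℕ} (B : Matrix (Fin m) (Fin n) ℝ) : 0 ≤ frobSq B := by
  apply Finset.sum_nonneg; intro i _; positivity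

lemma trace_mul_vecMulVec {d : ℕ} (C : Matrix (Fin d) (Fin d) ℝ) (a b : Fin d → ℝ) :
    Matrix.trace (C * Matrix.vecMulVec a b) = b ⬝ᵥ C.mulVec a := by
  simp only [Matrix.trace, Matrix.diag_apply, Matrix.mul_apply, Matrix.vecMulVec_apply,
    dotProduct, Matrix.mulVec, dotProduct, Finset.mul_sum]
  apply Finset.sum_congr rfl; intro k _
  apply Finset.sum_congr rfl; intro l _
  ring

lemma vecMulVec_idem {d : ℕ} (u : Fin d → ℝ) (hu : u ⬝ᵥ u = 1) :
    Matrix.vecMulVec u u * Matrix.vecMulVec u u = Matrix.vecMulVec u u := by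
  ext i j
  simp only [Matrix.mul_apply, Matrix.vecMulVec_apply]
  have : ∑ k, u i * u k * (u k * u j) = (u i * u j) * (u ⬝ᵥ u) := by
    simp [dotProduct, Finset.mul_sum]; apply Finset.sum_congr rfl; intros; ring
  rw [this, hu, mul_one]

lemma vecMulVec_transp {d : ℕ} (a b : Fin d → ℝ) :
    (Matrix.vecMulVec a b)ᵀ = Matrix.vecMulVec b a := by
  ext i j; simp [Matrix.vecMulVec_apply, mul_comm]

lemma lhs_eq {d n : ℕ} (X : Matrix (Fin d) (Fin n) ℝ) (u : Fin d → ℝ) (hu : u ⬝ᵥ u = 1) :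
    frobSq (X - Matrix.vecMulVec u u * X)
      = Matrix.trace (X * Xᵀ) - u ⬝ᵥ (X * Xᵀ).mulVec u := by
  set P := Matrix.vecMulVec u u with hP
  have hPt : Pᵀ = P := vecMulVec_transp u u
  rw [frobSq_eq_trace]
  have hexp : (X - P * X) * (X - P * X)ᵀ
      = X * Xᵀ - X * Xᵀ * P - (P * (X * Xᵀ) - P * (X * Xᵀ) * P) := by
    rw [Matrix.transpose_sub, Matrix.transpose_mul, hPt]
    simp only [Matrix.mul_sub, Matrix.sub_mul, Matrix.mul_assoc]
    abel
  rw [hexp]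
  have h1 : Matrix.trace (X * Xᵀ * P) = u ⬝ᵥ (X * Xᵀ).mulVec u := trace_mul_vecMulVec _ u u
  have h2 : Matrix.trace (P * (X * Xᵀ)) = u ⬝ᵥ (X * Xᵀ).mulVec u := by
    rw [Matrix.trace_mul_comm]; exact h1
  have h3 : Matrix.trace (P * (X * Xᵀ) * P) = u ⬝ᵥ (X * Xᵀ).mulVec u := by
    rw [Matrix.trace_mul_comm, ← Matrix.mul_assoc, vecMulVec_idem u hu]; exact h2
  rw [Matrix.trace_sub, Matrix.trace_sub, Matrix.trace_sub, h1, h2, h3]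
  ring

set_option maxHeartbeats 2000000 in
theorem stmt_13 (d n : ℕ) (hd : 2 ≤ d) (hn : 1 ≤ n)
    (X : Matrix (Fin d) (Fin n) ℝ) (A : Matrix (Fin d) (Fin d) ℝ) (hA : A.IsSymm)
    (σ : Fin d → ℝ) (v : Fin d → Fin d → ℝ)
    (hv : OrthonormalFamily v)
    (heig : ∀ i, ((n : ℝ)⁻¹ • (X * Xᵀ)).mulVec (v i) = σ i • v i)
    (hσ : Antitone σ)
    (σh : Fin d → ℝ) (vh : Fin d → Fin d → ℝ)
    (hvh : OrthonormalFamily vh)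
    (heigh : ∀ i, ((n : ℝ)⁻¹ • (X * Xᵀ) + A).mulVec (vh i) = σh i • vh i)
    (hσh : Antitone σh)
    (δ : ℝ) (hδdef : δ = σ ⟨0, by omega⟩ - σ ⟨1, by omega⟩) (hδ : 0 < δ) :
    (n : ℝ)⁻¹ * frobSq (X - Matrix.vecMulVec (vh ⟨0, by omega⟩) (vh ⟨0, by omega⟩) * X)
      ≤ 2 * (∑ i ∈ Finset.univ.filter fun i : Fin d => 1 ≤ i.val, σ i)
        + 8 / (n * δ ^ 2) * opNorm A ^ 2 * frobSq X := by
  have hn0 : (0:ℝ) < n := by exact_mod_cast hn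
  set i0 : Fin d := ⟨0, by omega⟩ with hi0
  set i1 : Fin d := ⟨1, by omega⟩ with hi1
  have hδ' : δ = σ i0 - σ i1 := hδdef
  set M : Matrix (Fin d) (Fin d) ℝ := (n : ℝ)⁻¹ • (X * Xᵀ) with hM
  have hMsym : Mᵀ = M := by
    rw [hM, Matrix.transpose_smul, Matrix.transpose_mul, Matrix.transpose_transpose]
  set u : Fin d → ℝ := vh i0 with hu'
  have hu : u ⬝ᵥ u = 1 := by simpa using hvh i0 i0
  have symdot : ∀ (B : Matrix (Fin d) (Fin d) ℝ), Bᵀ = B → ∀ a b : Fin d → ℝ,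
      a ⬝ᵥ B.mulVec b = B.mulVec a ⬝ᵥ b := by
    intro B hB a b
    rw [Matrix.dotProduct_mulVec]
    nth_rewrite 1 [← hB]
    rw [Matrix.vecMul_transpose]
  set c : Fin d → ℝ := fun i => v i ⬝ᵥ u with hc
  have hcdef : ∀ i, v i ⬝ᵥ u = c i := fun i => rfl
  have hvMdot : ∀ i (w : Fin d → ℝ), v i ⬝ᵥ M.mulVec w = σ i * (v i ⬝ᵥ w) := by
    intro i w
    rw [symdot M hMsym, heig i, smul_dotProduct, smul_eq_mul]
  have hvhMdot : ∀ i (w : Fin d → ℝ), vh i ⬝ᵥ (M + A).mulVec w = σh i * (vh i ⬝ᵥ w) := by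
    intro i w
    have hMAsym : (M + A)ᵀ = M + A := by rw [Matrix.transpose_add, hMsym, hA]
    rw [symdot (M + A) hMAsym, heigh i, smul_dotProduct, smul_eq_mul]
  have htr : Matrix.trace M = ∑ i, σ i := by
    rw [trace_orth hv M]
    apply Finset.sum_congr rfl; intro i _
    rw [hvMdot i (v i)]
    simp [hv i i]
  have hσnn : ∀ i, 0 ≤ σ i := by
    intro i
    have h1 : σ i = v i ⬝ᵥ M.mulVec (v i) := by rw [hvMdot i (v i)]; simp [hv i i]
    have h2 : v i ⬝ᵥ M.mulVec (v i)
        = (n:ℝ)⁻¹ * ((Xᵀ.mulVec (v i)) ⬝ᵥ (Xᵀ.mulVec (v i))) := by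
      rw [hM, Matrix.smul_mulVec, dotProduct_smul, smul_eq_mul]
      congr 1
      rw [← Matrix.mulVec_mulVec, Matrix.dotProduct_mulVec, ← Matrix.mulVec_transpose]
    rw [h1, h2]
    have h3 : 0 ≤ (Xᵀ.mulVec (v i)) ⬝ᵥ (Xᵀ.mulVec (v i)) := by
      apply Finset.sum_nonneg; intro j _; exact mul_self_nonneg _
    positivity
  have hc2sum : (∑ i, c i ^ 2) = 1 := by
    have h := (parseval hv u u).symm
    rw [hu] at h
    calc ∑ i, c i ^ 2 = ∑ i, (v i ⬝ᵥ u) * (v i ⬝ᵥ u) := by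
          apply Finset.sum_congr rfl; intro i _; rw [hcdef i]; ring
      _ = 1 := h
  have hQ : u ⬝ᵥ M.mulVec u = ∑ i, σ i * c i ^ 2 := by
    rw [parseval hv u (M.mulVec u)]
    apply Finset.sum_congr rfl; intro i _
    rw [hvMdot i u, hcdef i]; ring
  have hwtop : ∀ w : Fin d → ℝ, w ⬝ᵥ w = 1 → w ⬝ᵥ (M + A).mulVec w ≤ σh i0 := by
    intro w hw
    rw [parseval hvh w ((M + A).mulVec w)]
    have hsq : ∑ i, (vh i ⬝ᵥ w) ^ 2 = 1 := by
      have hp2 := (parseval hvh w w).symm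
      rw [hw] at hp2
      calc ∑ i, (vh i ⬝ᵥ w) ^ 2 = ∑ i, (vh i ⬝ᵥ w) * (vh i ⬝ᵥ w) := by
            apply Finset.sum_congr rfl; intro i _; ring
        _ = 1 := hp2
    calc ∑ i, (vh i ⬝ᵥ w) * (vh i ⬝ᵥ (M + A).mulVec w)
        = ∑ i, σh i * (vh i ⬝ᵥ w) ^ 2 := by
          apply Finset.sum_congr rfl; intro i _
          rw [hvhMdot i w]; ring
      _ ≤ ∑ i, σh i0 * (vh i ⬝ᵥ w) ^ 2 := by
          apply Finset.sum_le_sum; intro i _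
          apply mul_le_mul_of_nonneg_right _ (sq_nonneg _)
          exact hσh (by rw [Fin.le_def]; simp [hi0])
      _ = σh i0 * ∑ i, (vh i ⬝ᵥ w) ^ 2 := by rw [Finset.mul_sum]
      _ = σh i0 := by rw [hsq, mul_one]
  have dot_ge : ∀ w : Fin d → ℝ, w ⬝ᵥ w = 1 → -(opNorm A) ≤ w ⬝ᵥ A.mulVec w := by
    intro w hw
    have hcs := Finset.sum_mul_sq_le_sq_mul_sq Finset.univ w (A.mulVec w)
    have h2 := mulVec_dot_le A w hw
    have e1 : ∑ i, w i ^ 2 = 1 := by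
      calc ∑ i, w i ^ 2 = ∑ i, w i * w i := by apply Finset.sum_congr rfl; intros; ring
        _ = 1 := hw
    have e2 : (A.mulVec w) ⬝ᵥ (A.mulVec w) = ∑ i, (A.mulVec w) i ^ 2 := by
      simp [dotProduct, sq]
    have e3 : w ⬝ᵥ A.mulVec w = ∑ i, w i * (A.mulVec w) i := rfl
    rw [e3]
    rw [e1, one_mul] at hcs
    rw [e2] at h2
    nlinarith [opNorm_nonneg' A, sq_nonneg (∑ i, w i * (A.mulVec w) i + opNorm A)]
  have hweyl : σ i0 - opNorm A ≤ σh i0 := by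
    have hunit : v i0 ⬝ᵥ v i0 = 1 := by simpa using hv i0 i0
    have h1 : v i0 ⬝ᵥ (M + A).mulVec (v i0) = σ i0 + v i0 ⬝ᵥ A.mulVec (v i0) := by
      rw [Matrix.add_mulVec, dotProduct_add, hvMdot i0 (v i0), hunit, mul_one]
    have h2 := hwtop (v i0) hunit
    have h3 := dot_ge (v i0) hunit
    linarith
  have hkey : ∀ i, (σh i0 - σ i) * c i = v i ⬝ᵥ A.mulVec u := by
    intro i
    have h1 : v i ⬝ᵥ (M + A).mulVec u = σh i0 * c i := by
      rw [hu', heigh i0, dotProduct_smul, smul_eq_mul]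
    have h2 : v i ⬝ᵥ (M + A).mulVec u = σ i * c i + v i ⬝ᵥ A.mulVec u := by
      rw [Matrix.add_mulVec, dotProduct_add, hvMdot i u, hcdef i]
    rw [sub_mul, ← h1, h2]; ring
  set S := Finset.univ.filter (fun i : Fin d => 1 ≤ i.val) with hSdef
  have hSerase : S = Finset.univ.erase i0 := by
    ext i
    simp [hSdef, Finset.mem_erase, hi0, Fin.ext_iff, Nat.one_le_iff_ne_zero]
  have hsplit : ∀ f : Fin d → ℝ, (∑ i, f i) = f i0 + ∑ i ∈ S, f i := by
    intro f
    rw [hSerase]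
    exact (Finset.add_sum_erase _ f (Finset.mem_univ i0)).symm
  have h1c0 : 1 - c i0 ^ 2 = ∑ i ∈ S, c i ^ 2 := by
    have h := hsplit (fun i => c i ^ 2)
    rw [hc2sum] at h
    linarith
  have hDK : 1 - c i0 ^ 2 ≤ 4 * opNorm A ^ 2 / δ ^ 2 := by
    rcases le_or_gt (δ / 2) (opNorm A) with hcase | hcase
    · have hb1 : (1:ℝ) ≤ 4 * opNorm A ^ 2 / δ ^ 2 := by
        rw [le_div_iff₀ (by positivity)]
        nlinarith
      nlinarith [sq_nonneg (c i0)]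
    · have hterm : ∀ i ∈ S, c i ^ 2 ≤ 4 / δ ^ 2 * (v i ⬝ᵥ A.mulVec u) ^ 2 := by
        intro i hiS
        have hi1le : i1 ≤ i := by
          rw [hSdef, Finset.mem_filter] at hiS
          rw [Fin.le_def]
          simpa [hi1] using hiS.2
        have hσle : σ i ≤ σ i1 := hσ hi1le
        have hgap : δ / 2 < σh i0 - σ i := by linarith
        have hg : (v i ⬝ᵥ A.mulVec u) ^ 2 = (σh i0 - σ i) ^ 2 * c i ^ 2 := by
          rw [← hkey i]; ring
        rw [hg]
        have hK : (1:ℝ) ≤ 4 / δ ^ 2 * (σh i0 - σ i) ^ 2 := by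
          rw [div_mul_eq_mul_div, le_div_iff₀ (by positivity)]
          nlinarith
        nlinarith [mul_le_mul_of_nonneg_right hK (sq_nonneg (c i))]
      calc 1 - c i0 ^ 2 = ∑ i ∈ S, c i ^ 2 := h1c0
        _ ≤ ∑ i ∈ S, 4 / δ ^ 2 * (v i ⬝ᵥ A.mulVec u) ^ 2 := Finset.sum_le_sum hterm
        _ ≤ ∑ i, 4 / δ ^ 2 * (v i ⬝ᵥ A.mulVec u) ^ 2 := by
            apply Finset.sum_le_sum_of_subset_of_nonneg
            · rw [hSdef]; exact Finset.filter_subset _ _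
            · intro i _ _; positivity
        _ = 4 / δ ^ 2 * ((A.mulVec u) ⬝ᵥ (A.mulVec u)) := by
            rw [parseval hv (A.mulVec u) (A.mulVec u), Finset.mul_sum]
            apply Finset.sum_congr rfl; intros; ring
        _ ≤ 4 / δ ^ 2 * opNorm A ^ 2 :=
            mul_le_mul_of_nonneg_left (mulVec_dot_le A u hu) (by positivity)
        _ = 4 * opNorm A ^ 2 / δ ^ 2 := by ring
  have hgoalL : (n:ℝ)⁻¹ * frobSq (X - Matrix.vecMulVec u u * X)
      = (∑ i, σ i) - u ⬝ᵥ M.mulVec u := by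
    rw [lhs_eq X u hu, ← htr, hM, Matrix.trace_smul, smul_eq_mul,
      Matrix.smul_mulVec, dotProduct_smul, smul_eq_mul]
    ring
  have hsumS_nn : 0 ≤ ∑ i ∈ S, σ i := Finset.sum_nonneg (fun i _ => hσnn i)
  have hσcn : 0 ≤ ∑ i ∈ S, σ i * c i ^ 2 :=
    Finset.sum_nonneg (fun i _ => mul_nonneg (hσnn i) (sq_nonneg _))
  have hmain : (∑ i, σ i) - u ⬝ᵥ M.mulVec u ≤ σ i0 * (1 - c i0 ^ 2) + ∑ i ∈ S, σ i := by
    rw [hQ, hsplit σ, hsplit (fun i => σ i * c i ^ 2)]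
    have he : σ i0 * (1 - c i0 ^ 2) = σ i0 - σ i0 * c i0 ^ 2 := by ring
    rw [he]
    linarith
  have hT : (∑ i, σ i) = (n:ℝ)⁻¹ * frobSq X := by
    have htm : Matrix.trace M = (n:ℝ)⁻¹ * Matrix.trace (X * Xᵀ) := by
      rw [hM, Matrix.trace_smul, smul_eq_mul]
    rw [← htr, htm, frobSq_eq_trace]
  have hσ0T : σ i0 ≤ (n:ℝ)⁻¹ * frobSq X := by
    rw [← hT]
    have h := hsplit σ
    linarith
  have hb : σ i0 * (1 - c i0 ^ 2) ≤ 8 / (n * δ ^ 2) * opNorm A ^ 2 * frobSq X := by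
    have h1 : σ i0 * (1 - c i0 ^ 2) ≤ σ i0 * (4 * opNorm A ^ 2 / δ ^ 2) :=
      mul_le_mul_of_nonneg_left hDK (hσnn i0)
    have h2 : σ i0 * (4 * opNorm A ^ 2 / δ ^ 2)
        ≤ ((n:ℝ)⁻¹ * frobSq X) * (4 * opNorm A ^ 2 / δ ^ 2) :=
      mul_le_mul_of_nonneg_right hσ0T
        (div_nonneg (mul_nonneg (by norm_num) (sq_nonneg _)) (sq_nonneg δ))
    have h3 : ((n:ℝ)⁻¹ * frobSq X) * (4 * opNorm A ^ 2 / δ ^ 2)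
        ≤ 8 / (n * δ ^ 2) * opNorm A ^ 2 * frobSq X := by
      have he : ((n:ℝ)⁻¹ * frobSq X) * (4 * opNorm A ^ 2 / δ ^ 2)
          = 4 / (n * δ ^ 2) * (opNorm A ^ 2 * frobSq X) := by
        have hnne : (n:ℝ) ≠ 0 := ne_of_gt hn0
        have hδne : δ ≠ 0 := ne_of_gt hδ
        field_simp
      have he2 : 8 / ((n:ℝ) * δ ^ 2) * opNorm A ^ 2 * frobSq X
          = 8 / (n * δ ^ 2) * (opNorm A ^ 2 * frobSq X) := by ring
      rw [he, he2]
      apply mul_le_mul_of_nonneg_right _ (mul_nonneg (sq_nonneg _) (frobSq_nonneg X))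
      have hpos : (0:ℝ) < n * δ ^ 2 := by positivity
      exact (div_le_div_iff_of_pos_right hpos).mpr (by norm_num)
    linarith
  calc (n:ℝ)⁻¹ * frobSq (X - Matrix.vecMulVec u u * X)
      = (∑ i, σ i) - u ⬝ᵥ M.mulVec u := hgoalL
    _ ≤ σ i0 * (1 - c i0 ^ 2) + ∑ i ∈ S, σ i := hmain
    _ ≤ 8 / (n * δ ^ 2) * opNorm A ^ 2 * frobSq X + ∑ i ∈ S, σ i := by linarith
    _ ≤ 2 * (∑ i ∈ S, σ i) + 8 / (n * δ ^ 2) * opNorm A ^ 2 * frobSq X := by linarith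
end
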